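/- Let R be a finite irreducible root system, θ its highest root, and suppose y ∈ W(R) satisfies: θ ∉ N(y), and for every pair β₁, β₂ ∈ R⁺ with β₁ + β₂ = θ exactly one of β₁, β₂ lies in N(y). Then there exists a long simple root β such that y(β) = θ. -/

import Mathlib

open scoped RealInnerProductSpace

/-- Geometric data of a (finite or affine) root system with a choice of
positive and simple roots, inside a real inner product space. -/
structure RootSystemData (V : Type*) [NormedAddCommGroup V] [InnerProductSpace ℝ V] where
  roots : Set V
  pos : Set V
  simples : Set V
  simples_sub : simples ⊆ pos
  pos_sub : pos ⊆ roots
  ne_zero : ∀ α ∈ roots, α ≠ (0 : V)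
  eq_union : roots = pos ∪ (Neg.neg '' pos)
  not_both : ∀ α ∈ pos, -α ∉ pos

namespace RootSystemData

variable {V : Type*} [NormedAddCommGroup V] [InnerProductSpace ℝ V]
  [FiniteDimensional ℝ V]

/-- The orthogonal reflection in the hyperplane orthogonal to `α`. -/
noncomputable def srefl (α : V) : V ≃ₗᵢ[ℝ] V := Submodule.reflection (ℝ ∙ α)ᗮ

variable (R : RootSystemData V)

/-- The root system data is geometric: simple reflections permute the
positive roots other than the corresponding simple root, and the set of
roots is stable under all reflections in roots. -/
structure IsGeometric : Prop where
  simple_perm : ∀ α ∈ R.simples, ∀ β ∈ R.pos, β ≠ α → srefl α β ∈ R.pos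
  refl_stable : ∀ α ∈ R.roots, ∀ β ∈ R.roots, srefl α β ∈ R.roots
  pos_comb : ∀ α ∈ R.pos, α ∈ AddSubmonoid.closure R.simples

/-- The Weyl group: the group generated by the simple reflections. -/
noncomputable def W : Subgroup (V ≃ₗᵢ[ℝ] V) :=
  Subgroup.closure {g | ∃ α ∈ R.simples, g = srefl α}

/-- The inversion set `N(w) = {α ∈ Δ⁺ ∣ w⁻¹ α ∈ -Δ⁺}`. -/
def N (w : V ≃ₗᵢ[ℝ] V) : Set V := {α | α ∈ R.pos ∧ w⁻¹ α ∈ Neg.neg '' R.pos}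

/-- `l` is a word in the simple reflections representing `w`. -/
noncomputable def IsWord (l : List V) (w : V ≃ₗᵢ[ℝ] V) : Prop :=
  (∀ α ∈ l, α ∈ R.simples) ∧ w = (l.map srefl).prod

/-- The length of `w` : the least length of a word in the simple reflections
representing `w`. -/
noncomputable def length (w : V ≃ₗᵢ[ℝ] V) : ℕ :=
  sInf {n | ∃ l : List V, R.IsWord l w ∧ l.length = n}

/-- A reduced expression. -/
noncomputable def IsReduced (l : List V) (w : V ≃ₗᵢ[ℝ] V) : Prop :=
  R.IsWord l w ∧ l.length = R.length w

/-- The (left) weak Bruhat order: some reduced expression of `w₁` is an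
initial segment of a reduced expression of `w₂`. -/
noncomputable def weakLE (w₁ w₂ : V ≃ₗᵢ[ℝ] V) : Prop :=
  ∃ l₁ l₂ : List V, R.IsReduced l₁ w₁ ∧ R.IsReduced (l₁ ++ l₂) w₂

end RootSystemData

open RootSystemData
open scoped RealInnerProductSpace

variable {V : Type*} [NormedAddCommGroup V] [InnerProductSpace ℝ V] [FiniteDimensional ℝ V]


set_option linter.unusedSectionVars false

section Aux
variable {V : Type*} [NormedAddCommGroup V] [InnerProductSpace ℝ V] [FiniteDimensional ℝ V]

theorem srefl_apply (α x : V) :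
    srefl α x = x - (2 * ⟪α, x⟫ / ⟪α, α⟫) • α := by
  show Submodule.reflection (ℝ ∙ α)ᗮ x = _
  rw [Submodule.reflection_orthogonal_apply, Submodule.reflection_singleton_apply,
    real_inner_self_eq_norm_sq, neg_sub, two_smul, ← add_smul]
  norm_num
  congr 1
  ring

theorem srefl_neg_of_mem (α x : V) (hx : x ∈ (Submodule.span ℝ {α} : Submodule ℝ V)) :
    srefl α x = -x := by
  show Submodule.reflection (ℝ ∙ α)ᗮ x = -x
  exact Submodule.reflection_mem_subspace_orthogonalComplement_eq_neg
    (by rwa [Submodule.orthogonal_orthogonal])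

theorem srefl_srefl (α x : V) : srefl α (srefl α x) = x := Submodule.reflection_reflection _ x

theorem srefl_inv (α : V) : (srefl α)⁻¹ = srefl α := Submodule.reflection_inv

theorem real_inner_self_pos' (x : V) (h : x ≠ 0) : (0:ℝ) < ⟪x, x⟫ :=
  lt_of_le_of_ne real_inner_self_nonneg (Ne.symm (inner_self_ne_zero.mpr h))

namespace RootSystemData
variable (R : RootSystemData V)

theorem neg_mem_roots {α : V} (hα : α ∈ R.roots) : -α ∈ R.roots := by
  rw [R.eq_union] at hα ⊢
  rcases hα with h | ⟨q, hq, rfl⟩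
  · exact Or.inr ⟨α, h, rfl⟩
  · exact Or.inl (by simpa using hq)

theorem w_maps_roots (hR : R.IsGeometric) {y : V ≃ₗᵢ[ℝ] V} (hy : y ∈ R.W) :
    ∀ r ∈ R.roots, y r ∈ R.roots ∧ y⁻¹ r ∈ R.roots := by
  have hgen : ∀ α ∈ R.simples, α ∈ R.roots := fun α hα => R.pos_sub (R.simples_sub hα)
  refine Subgroup.closure_induction
    (p := fun g _ => ∀ r ∈ R.roots, g r ∈ R.roots ∧ g⁻¹ r ∈ R.roots) ?_ ?_ ?_ ?_ hy
  · rintro g ⟨α, hα, rfl⟩ r hr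
    refine ⟨hR.refl_stable α (hgen α hα) r hr, ?_⟩
    rw [srefl_inv]
    exact hR.refl_stable α (hgen α hα) r hr
  · intro r hr
    refine ⟨?_, ?_⟩ <;> simpa using hr
  · intro g h _ _ hg hh r hr
    refine ⟨?_, ?_⟩
    · have := (hg _ ((hh r hr).1)).1
      simpa using this
    · have := (hh _ ((hg r hr).2)).2
      simpa using this
  · intro g _ hg r hr
    exact ⟨(hg r hr).2, by simpa using (hg r hr).1⟩

theorem exists_rho (hR : R.IsGeometric) (hfin : R.roots.Finite) :
    ∃ ρ : V, ∀ s ∈ R.simples, ⟪ρ, s⟫ = ⟪s, s⟫ := by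
  classical
  have hposfin : R.pos.Finite := hfin.subset R.pos_sub
  set P : Finset V := hposfin.toFinset with hP
  set ρ : V := ∑ α ∈ P, α with hρ
  refine ⟨ρ, fun s hs => ?_⟩
  have hspos : s ∈ R.pos := R.simples_sub hs
  have hsP : s ∈ P := by simp [hP, Set.Finite.mem_toFinset, hspos]
  have hs0 : s ≠ 0 := R.ne_zero s (R.pos_sub hspos)
  have hss : (0:ℝ) < ⟪s, s⟫ := real_inner_self_pos' s hs0
  have hsrefl_s : srefl s s = -s := srefl_neg_of_mem s s (Submodule.mem_span_singleton_self s)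
  have hmem : ∀ a ∈ P.erase s, srefl s a ∈ P.erase s := by
    intro a ha
    rw [Finset.mem_erase] at ha
    obtain ⟨hane, haP⟩ := ha
    have hapos : a ∈ R.pos := by simpa [hP, Set.Finite.mem_toFinset] using haP
    have h1 : srefl s a ∈ R.pos := hR.simple_perm s hs a hapos hane
    rw [Finset.mem_erase]
    refine ⟨?_, by simp [hP, Set.Finite.mem_toFinset, h1]⟩
    intro heq
    have h2 : a = srefl s s := by
      have := congrArg (srefl s) heq
      rwa [srefl_srefl] at this
    rw [hsrefl_s] at h2
    exact R.not_both a hapos (by rw [h2]; simpa using hspos)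
  have hinj : ∀ a ∈ P.erase s, srefl s (srefl s a) = a := fun a _ => srefl_srefl s a
  have hsum1 : (∑ α ∈ P.erase s, srefl s α) = ∑ α ∈ P.erase s, α :=
    Finset.sum_nbij' (fun a => srefl s a) (fun a => srefl s a)
      hmem hmem hinj hinj (fun a _ => rfl)
  have hsum2 : (∑ α ∈ P, srefl s α) = ρ - s + -s := by
    rw [← Finset.sum_erase_add _ _ hsP, hsum1, Finset.sum_erase_eq_sub hsP, hsrefl_s]
  have hsum3 : srefl s ρ = ∑ α ∈ P, srefl s α :=
    map_sum (srefl s).toLinearEquiv.toLinearMap _ _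
  rw [srefl_apply] at hsum3
  have heq : ρ - (2 * ⟪s, ρ⟫ / ⟪s, s⟫) • s = ρ - (2:ℝ) • s := by
    rw [hsum3, hsum2, two_smul]; abel
  have hcs : (2 * ⟪s, ρ⟫ / ⟪s, s⟫) • s = (2:ℝ) • s := sub_right_injective heq
  have hc : 2 * ⟪s, ρ⟫ / ⟪s, s⟫ = 2 := smul_left_injective ℝ hs0 hcs
  rw [real_inner_comm]
  field_simp at hc
  linarith

end RootSystemData
end Aux

/-- if `θ ∉ N(y)` and exactly one summand of every decomposition
`β₁ + β₂ = θ` lies in `N(y)`, then `y(β) = θ` for some long simple root `β`. -/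
theorem exists_long_simple_to_highest (R : RootSystemData V) (hR : R.IsGeometric)
    (hfin : R.roots.Finite)
    (hcrys : ∀ α ∈ R.roots, ∀ β ∈ R.roots, ∃ n : ℤ, 2 * ⟪α, β⟫ / ⟪α, α⟫ = (n : ℝ))
    (hirr : ∀ S₁ S₂ : Set V, R.simples = S₁ ∪ S₂ →
      (∀ a ∈ S₁, ∀ b ∈ S₂, ⟪a, b⟫ = 0) → S₁ = ∅ ∨ S₂ = ∅)
    (θ : V) (hθpos : θ ∈ R.pos)
    (hθhigh : ∀ α ∈ R.roots, θ - α ∈ AddSubmonoid.closure R.simples)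
    (y : V ≃ₗᵢ[ℝ] V) (hy : y ∈ R.W) (hθnot : θ ∉ R.N y)
    (hpairs : ∀ β₁ β₂ : V, β₁ ∈ R.pos → β₂ ∈ R.pos → β₁ + β₂ = θ →
      Xor' (β₁ ∈ R.N y) (β₂ ∈ R.N y)) :
    ∃ β ∈ R.simples, ‖β‖ = ‖θ‖ ∧ y β = θ := by
  classical
  obtain ⟨ρ, hρ⟩ := R.exists_rho hR hfin
  have hθroot : θ ∈ R.roots := R.pos_sub hθpos
  have hW := R.w_maps_roots hR hy
  have hinv : ∀ v : V, y (y⁻¹ v) = v := fun v => by simp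
  have hinv' : ∀ v : V, (y⁻¹) (y v) = v := fun v => by simp
  -- positivity of the functional ⟪ρ, ·⟫ on the monoid generated by simples
  have fcl : ∀ x ∈ AddSubmonoid.closure R.simples, x = 0 ∨ 0 < ⟪ρ, x⟫ := by
    intro x hx
    refine AddSubmonoid.closure_induction ?_ ?_ ?_ hx
    · intro z hz
      right
      rw [hρ z hz]
      exact real_inner_self_pos' z (R.ne_zero z (R.pos_sub (R.simples_sub hz)))
    · exact Or.inl rfl
    · rintro a b _ _ (rfl | ha) (rfl | hb)
      · simp
      · right; simpa using hb
      · right; simpa using ha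
      · right; rw [inner_add_right]; linarith
  have fclnn : ∀ x ∈ AddSubmonoid.closure R.simples, 0 ≤ ⟪ρ, x⟫ := by
    intro x hx
    rcases fcl x hx with rfl | h
    · simp
    · linarith
  have fpos : ∀ α ∈ R.pos, 0 < ⟪ρ, α⟫ := fun α ha =>
    (fcl α (hR.pos_comb α ha)).resolve_left (R.ne_zero α (R.pos_sub ha))
  have hsign : ∀ α ∈ R.roots, 0 ≤ ⟪ρ, α⟫ → α ∈ R.pos := by
    intro α hα h
    rcases (R.eq_union ▸ hα) with h1 | ⟨q, hq, rfl⟩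
    · exact h1
    · have := fpos q hq
      rw [inner_neg_right] at h
      linarith
  have hhigh : ∀ r ∈ R.roots, ⟪ρ, r⟫ ≤ ⟪ρ, θ⟫ := by
    intro r hr
    have := fclnn _ (hθhigh r hr)
    rw [inner_sub_right] at this
    linarith
  -- the candidate root
  set β : V := (y⁻¹) θ with hβdef
  have hβroot : β ∈ R.roots := (hW θ hθroot).2
  have hβpos : β ∈ R.pos := by
    rcases (R.eq_union ▸ hβroot) with h | h
    · exact h
    · exact absurd (show θ ∈ R.N y from ⟨hθpos, h⟩) hθnot
  have hyβ : y β = θ := hinv θ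
  have hβ0 : β ≠ 0 := R.ne_zero β hβroot
  have hnormβ : ‖β‖ = ‖θ‖ := by
    have := y.norm_map β
    rw [hyβ] at this
    exact this.symm
  suffices hsimp : β ∈ R.simples by exact ⟨β, hsimp, hnormβ, hyβ⟩
  by_contra hβns
  -- find a simple root with positive inner product with β
  have hfind : ∀ x ∈ AddSubmonoid.closure R.simples,
      0 < ⟪β, x⟫ → ∃ s ∈ R.simples, 0 < ⟪β, s⟫ := by
    intro x hx
    refine AddSubmonoid.closure_induction ?_ ?_ ?_ hx
    · exact fun z hz h => ⟨z, hz, h⟩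
    · intro h; simp at h
    · intro a b _ _ ha hb h
      rw [inner_add_right] at h
      rcases lt_or_ge 0 ⟪β, a⟫ with h1 | h1
      · exact ha h1
      · exact hb (by linarith)
  obtain ⟨s, hs, hβs_pos⟩ :=
    hfind β (hR.pos_comb β hβpos) (real_inner_self_pos' β hβ0)
  have hspos : s ∈ R.pos := R.simples_sub hs
  have hsroot : s ∈ R.roots := R.pos_sub hspos
  have hs0 : s ≠ 0 := R.ne_zero s hsroot
  have hss : (0:ℝ) < ⟪s, s⟫ := real_inner_self_pos' s hs0
  have hββ : (0:ℝ) < ⟪β, β⟫ := real_inner_self_pos' β hβ0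
  have hβne_s : β ≠ s := fun h => hβns (h ▸ hs)
  rcases eq_or_lt_of_le (real_inner_le_norm β s) with hpar | hlt
  · -- parallel case : contradiction
    have hdep : ‖s‖ • β = ‖β‖ • s := by
      by_contra hne
      exact absurd hpar.symm (ne_of_gt (inner_lt_norm_mul_iff_real.mpr hne))
    have hsnorm : ‖s‖ ≠ 0 := norm_ne_zero_iff.mpr hs0
    have hmemspan : β ∈ (Submodule.span ℝ {s} : Submodule ℝ V) := by
      have hβeq : β = (‖s‖⁻¹ * ‖β‖) • s := by
        rw [mul_smul, ← hdep, smul_smul, inv_mul_cancel₀ hsnorm, one_smul]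
      rw [hβeq]
      exact Submodule.smul_mem _ _ (Submodule.mem_span_singleton_self s)
    have h1 : srefl s β ∈ R.pos := hR.simple_perm s hs β hβpos hβne_s
    rw [srefl_neg_of_mem s β hmemspan] at h1
    exact R.not_both β hβpos h1
  · -- non-parallel case
    obtain ⟨n, hn⟩ := hcrys s hsroot β hβroot
    obtain ⟨m, hm⟩ := hcrys β hβroot s hsroot
    have hcomm : ⟪s, β⟫ = ⟪β, s⟫ := real_inner_comm β s
    have hn1 : 1 ≤ n := by
      have h0 : (0:ℝ) < (n:ℝ) := by
        rw [← hn]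
        apply div_pos _ hss
        rw [hcomm]; linarith
      have : (0:ℤ) < n := by exact_mod_cast h0
      omega
    have hm1 : 1 ≤ m := by
      have h0 : (0:ℝ) < (m:ℝ) := by
        rw [← hm]
        apply div_pos _ hββ
        linarith
      have : (0:ℤ) < m := by exact_mod_cast h0
      omega
    have hnm : n = 1 ∨ m = 1 := by
      have hsq : ⟪β, s⟫ ^ 2 < ⟪s, s⟫ * ⟪β, β⟫ := by
        nlinarith [real_inner_self_eq_norm_mul_norm s, real_inner_self_eq_norm_mul_norm β,
          norm_nonneg s, norm_nonneg β]
      have h4 : ((n : ℝ)) * m < 4 := by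
        rw [← hn, ← hm, div_mul_div_comm]
        rw [div_lt_iff₀ (by positivity)]
        nlinarith
      have h4' : n * m < 4 := by exact_mod_cast h4
      by_contra hcon
      push_neg at hcon
      obtain ⟨hn2, hm2⟩ := hcon
      have : 2 ≤ n := by omega
      have : 2 ≤ m := by omega
      nlinarith
    set γ : V := β - s with hγ
    have hsreflβ : srefl s β = β - (n : ℝ) • s := by
      rw [srefl_apply, hn]
    have hsreflβpos : srefl s β ∈ R.pos := hR.simple_perm s hs β hβpos hβne_s
    have hγroot : γ ∈ R.roots := by
      rcases hnm with h1 | h1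
      · have heq : srefl s β = γ := by
          rw [hsreflβ, h1]; push_cast; rw [one_smul]
        rw [← heq]
        exact hR.refl_stable s hsroot β hβroot
      · have heq : srefl β s = -γ := by
          rw [srefl_apply, hm, h1, hγ]; push_cast; rw [one_smul]; abel
        have hroot := hR.refl_stable β hβroot s hsroot
        rw [heq] at hroot
        have := R.neg_mem_roots hroot
        simpa using this
    have hfs : 0 < ⟪ρ, s⟫ := fpos s hspos
    have hfβγ : 0 < ⟪ρ, srefl s β⟫ := fpos _ hsreflβpos
    have hfγ : 0 < ⟪ρ, γ⟫ := by
      rw [hsreflβ, inner_sub_right, inner_smul_right] at hfβγ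
      rw [hγ, inner_sub_right]
      have h1 : (1:ℝ) ≤ (n:ℝ) := by exact_mod_cast hn1
      nlinarith
    have hγpos : γ ∈ R.pos := hsign γ hγroot (le_of_lt hfγ)
    have hdecomp : y γ + y s = θ := by
      rw [← hyβ, hγ, map_sub]; abel
    have hμroot : y γ ∈ R.roots := (hW γ (R.pos_sub hγpos)).1
    have hνroot : y s ∈ R.roots := (hW s hsroot).1
    have hsplit : ⟪ρ, y γ⟫ + ⟪ρ, y s⟫ = ⟪ρ, θ⟫ := by
      rw [← inner_add_right, hdecomp]
    have hμpos : y γ ∈ R.pos := by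
      apply hsign _ hμroot
      have h1 := hhigh (y s) hνroot
      linarith
    have hνpos : y s ∈ R.pos := by
      apply hsign _ hνroot
      have h1 := hhigh (y γ) hμroot
      linarith
    have hxor := hpairs (y γ) (y s) hμpos hνpos hdecomp
    have hμN : y γ ∉ R.N y := by
      rintro ⟨-, q, hq, hq2⟩
      rw [hinv'] at hq2
      exact R.not_both γ hγpos (by rw [← hq2]; simpa using hq)
    have hνN : y s ∉ R.N y := by
      rintro ⟨-, q, hq, hq2⟩
      rw [hinv'] at hq2
      exact R.not_both s hspos (by rw [← hq2]; simpa using hq)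
    rcases hxor with ⟨h, -⟩ | ⟨h, -⟩
    · exact hμN h
    · exact hνN h
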